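/- Let n ≥ 2 and ε ∈ (0, 1). Let (G(k))_{k≥1} be a sequence of rooted communication graphs on n nodes and Ĝ(ℓ) = G((ℓ−1)(n−1)+1) ∘ ⋯ ∘ G(ℓ(n−1)) the macro-round graphs. Let x : ℕ → ℝ^n be the amortized mid-point execution: x(0) ∈ [0,1]^n and for each ℓ ≥ 1 and each p, x(ℓ)_p = (m_p + M_p)/2, where m_p = min{x(ℓ−1)_q : q ∈ In_p(Ĝ(ℓ))} and M_p = max{x(ℓ−1)_q : q ∈ In_p(Ĝ(ℓ))}. Then δ(x(ℓ)) ≤ 2^{−ℓ}·δ(x(0)) for all ℓ ≥ 0, and δ(x(L)) ≤ ε for L = ⌈log₂(1/ε)⌉. (The amortized mid-point algorithm achieves ε-agreement in (n−1)·⌈log₂(1/ε)⌉ rounds in anonymous rooted network models.) -/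

import Mathlib

/-- `δ(x) = max_p x_p − min_p x_p`. -/
noncomputable def delta {n : ℕ} (x : Fin n → ℝ) : ℝ :=
  sSup (Set.range x) - sInf (Set.range x)

/-- A communication graph is rooted if there is a node `r` from which every node is
reachable by a directed path. -/
def Rooted {n : ℕ} (E : Fin n → Fin n → Prop) : Prop :=
  ∃ r, ∀ p, Relation.ReflTransGen E r p

/-- `ProdSeg G a m` is the product `G (a+1) ∘ G (a+2) ∘ ⋯ ∘ G (a+m)`, where the product
`G ∘ H` has an edge `(p,q)` iff there is `r` with `(p,r) ∈ G` and `(r,q) ∈ H`;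
the empty product is the identity graph. -/
def ProdSeg {n : ℕ} (G : ℕ → Fin n → Fin n → Prop) (a : ℕ) : ℕ → Fin n → Fin n → Prop
  | 0 => fun p q => p = q
  | m + 1 => fun p q => ∃ r, ProdSeg G a m p r ∧ G (a + m + 1) r q

section aux
variable {n : ℕ}

def InSet (E : Fin n → Fin n → Prop) (S : Set (Fin n)) : Set (Fin n) := {q | ∃ p ∈ S, E q p}

lemma InSet_mono (E : Fin n → Fin n → Prop) {S T : Set (Fin n)} (h : S ⊆ T) :
    InSet E S ⊆ InSet E T := fun q ⟨p, hp, he⟩ => ⟨p, h hp, he⟩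

lemma subset_InSet {E : Fin n → Fin n → Prop} (hrefl : ∀ p, E p p) (S : Set (Fin n)) :
    S ⊆ InSet E S := fun p hp => ⟨p, hp, hrefl p⟩

lemma mem_of_rtg {E : Fin n → Fin n → Prop} {S : Set (Fin n)} (hcl : InSet E S ⊆ S) :
    ∀ {a b : Fin n}, Relation.ReflTransGen E a b → b ∈ S → a ∈ S := by
  intro a b h
  induction h with
  | refl => exact id
  | tail _ e ih => intro hc; exact ih (hcl ⟨_, hc, e⟩)

lemma root_mem {E : Fin n → Fin n → Prop} {r : Fin n}
    (hr : ∀ p, Relation.ReflTransGen E r p) {S : Set (Fin n)} (hS : S.Nonempty)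
    (hcl : InSet E S ⊆ S) : r ∈ S := by
  obtain ⟨s, hs⟩ := hS
  exact mem_of_rtg hcl (hr s) hs

lemma pair_growth {E : Fin n → Fin n → Prop} (hrefl : ∀ p, E p p) (hrooted : Rooted E)
    {S T : Set (Fin n)} (hS : S.Nonempty) (hT : T.Nonempty)
    (hdis : Disjoint (InSet E S) (InSet E T)) :
    S.ncard + T.ncard + 1 ≤ (InSet E S).ncard + (InSet E T).ncard := by
  obtain ⟨r, hr⟩ := hrooted
  have hSsub : S ⊆ InSet E S := subset_InSet hrefl S
  have hTsub : T ⊆ InSet E T := subset_InSet hrefl T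
  by_cases hcS : InSet E S ⊆ S
  · by_cases hcT : InSet E T ⊆ T
    · exfalso
      have h1 : r ∈ S := root_mem hr hS hcS
      have h2 : r ∈ T := root_mem hr hT hcT
      exact (hdis.ne_of_mem (hSsub h1) (hTsub h2)) rfl
    · have h2 : T.ncard < (InSet E T).ncard :=
        Set.ncard_lt_ncard (ssubset_of_subset_not_subset hTsub hcT) (Set.toFinite _)
      have := Set.ncard_le_ncard hSsub (Set.toFinite _)
      omega
  · have h1 : S.ncard < (InSet E S).ncard :=
      Set.ncard_lt_ncard (ssubset_of_subset_not_subset hSsub hcS) (Set.toFinite _)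
    have := Set.ncard_le_ncard hTsub (Set.toFinite _)
    omega

lemma ProdSeg_refl (G : ℕ → Fin n → Fin n → Prop) (a : ℕ)
    (hrefl : ∀ k, 1 ≤ k → ∀ p, G k p p) : ∀ m p, ProdSeg G a m p p := by
  intro m
  induction m with
  | zero => intro p; rfl
  | succ m ih => intro p; exact ⟨p, ih p, hrefl _ (Nat.le_add_left _ _) p⟩

lemma InSet_ProdSeg_succ (G : ℕ → Fin n → Fin n → Prop) (a m : ℕ) (S : Set (Fin n)) :
    InSet (ProdSeg G a (m + 1)) S = InSet (ProdSeg G a m) (InSet (G (a + m + 1)) S) := by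
  ext q
  constructor
  · rintro ⟨p, hp, r, hqr, hrp⟩
    exact ⟨r, ⟨p, hp, hrp⟩, hqr⟩
  · rintro ⟨r, ⟨p, hp, hrp⟩, hqr⟩
    exact ⟨p, hp, r, hqr, hrp⟩

lemma prod_growth (G : ℕ → Fin n → Fin n → Prop) (a : ℕ)
    (hrefl : ∀ k, 1 ≤ k → ∀ p, G k p p) (hrooted : ∀ k, 1 ≤ k → Rooted (G k)) :
    ∀ m (S T : Set (Fin n)), S.Nonempty → T.Nonempty →
      Disjoint (InSet (ProdSeg G a m) S) (InSet (ProdSeg G a m) T) →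
      S.ncard + T.ncard + m ≤ (InSet (ProdSeg G a m) S).ncard + (InSet (ProdSeg G a m) T).ncard := by
  intro m
  induction m with
  | zero =>
    intro S T hS hT _
    have e : ∀ U : Set (Fin n), InSet (ProdSeg G a 0) U = U := by
      intro U; ext q
      constructor
      · rintro ⟨p, hp, h⟩; exact (show q = p from h) ▸ hp
      · intro hq; exact ⟨q, hq, rfl⟩
    rw [e, e]; omega
  | succ m ih =>
    intro S T hS hT hdis
    simp only [InSet_ProdSeg_succ] at hdis ⊢
    set S' := InSet (G (a + m + 1)) S with hS'def
    set T' := InSet (G (a + m + 1)) T with hT'def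
    have hrefl' : ∀ p, G (a + m + 1) p p := hrefl _ (Nat.le_add_left _ _)
    have hS' : S'.Nonempty := hS.mono (subset_InSet hrefl' S)
    have hT' : T'.Nonempty := hT.mono (subset_InSet hrefl' T)
    have hPrefl : ∀ p, ProdSeg G a m p p := ProdSeg_refl G a hrefl m
    have hdis' : Disjoint S' T' :=
      hdis.mono (subset_InSet hPrefl S') (subset_InSet hPrefl T')
    have h1 : S.ncard + T.ncard + 1 ≤ S'.ncard + T'.ncard :=
      pair_growth hrefl' (hrooted _ (Nat.le_add_left _ _)) hS hT hdis'
    have h2 := ih S' T' hS' hT' hdis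
    omega

lemma nonsplit (G : ℕ → Fin n → Fin n → Prop) (a : ℕ) (hn : 2 ≤ n)
    (hrefl : ∀ k, 1 ≤ k → ∀ p, G k p p) (hrooted : ∀ k, 1 ≤ k → Rooted (G k)) :
    ∀ p q : Fin n, ∃ c, ProdSeg G a (n - 1) c p ∧ ProdSeg G a (n - 1) c q := by
  intro p q
  by_contra hc
  push_neg at hc
  have hdis : Disjoint (InSet (ProdSeg G a (n - 1)) {p}) (InSet (ProdSeg G a (n - 1)) {q}) := by
    rw [Set.disjoint_left]
    rintro c ⟨p', hp', h1⟩ ⟨q', hq', h2⟩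
    rw [Set.mem_singleton_iff] at hp' hq'
    exact hc c (hp' ▸ h1) (hq' ▸ h2)
  have h := prod_growth G a hrefl hrooted (n - 1) {p} {q} ⟨p, rfl⟩ ⟨q, rfl⟩ hdis
  simp only [Set.ncard_singleton] at h
  have hle : (InSet (ProdSeg G a (n - 1)) {p}).ncard + (InSet (ProdSeg G a (n - 1)) {q}).ncard ≤ n := by
    rw [← Set.ncard_union_eq hdis (Set.toFinite _) (Set.toFinite _)]
    calc _ ≤ (Set.univ : Set (Fin n)).ncard := Set.ncard_le_ncard (Set.subset_univ _) (Set.toFinite _)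
    _ = n := by simp [Set.ncard_univ]
  omega

lemma step_bound (hn : 2 ≤ n) (E : Fin n → Fin n → Prop)
    (hErefl : ∀ p, E p p)
    (hsplit : ∀ p q, ∃ c, E c p ∧ E c q)
    (y z : Fin n → ℝ)
    (hupd : ∀ p, z p = (sInf (y '' {q | E q p}) + sSup (y '' {q | E q p})) / 2) :
    delta z ≤ delta y / 2 := by
  have hne : Nonempty (Fin n) := ⟨⟨0, by omega⟩⟩
  have hry : (Set.range y).Nonempty := Set.range_nonempty y
  have hrz : (Set.range z).Nonempty := Set.range_nonempty z
  set m := sInf (Set.range y)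
  set M := sSup (Set.range y)
  have hSp : ∀ p : Fin n, (y '' {q | E q p}).Nonempty := fun p => ⟨y p, p, hErefl p, rfl⟩
  have hSpfin : ∀ p : Fin n, (y '' {q | E q p}).Finite := fun p => (Set.toFinite _).image y
  have hsub : ∀ p : Fin n, y '' {q | E q p} ⊆ Set.range y := fun p =>
    Set.image_subset_range y _
  have hinf_ge : ∀ p : Fin n, m ≤ sInf (y '' {q | E q p}) := fun p =>
    csInf_le_csInf ((Set.finite_range y).bddBelow) (hSp p) (hsub p)
  have hsup_le : ∀ p : Fin n, sSup (y '' {q | E q p}) ≤ M := fun p =>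
    csSup_le_csSup ((Set.finite_range y).bddAbove) (hSp p) (hsub p)
  have hinf_le : ∀ p c : Fin n, E c p → sInf (y '' {q | E q p}) ≤ y c := fun p c hc =>
    csInf_le (hSpfin p).bddBelow ⟨c, hc, rfl⟩
  have hsup_ge : ∀ p c : Fin n, E c p → y c ≤ sSup (y '' {q | E q p}) := fun p c hc =>
    le_csSup (hSpfin p).bddAbove ⟨c, hc, rfl⟩
  have key : ∀ p q : Fin n, z p - z q ≤ (M - m) / 2 := by
    intro p q
    obtain ⟨c, hcp, hcq⟩ := hsplit p q
    have h1 : z p ≤ (y c + M) / 2 := by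
      rw [hupd p]
      have := hinf_le p c hcp
      have := hsup_le p
      linarith
    have h2 : (m + y c) / 2 ≤ z q := by
      rw [hupd q]
      have := hsup_ge q c hcq
      have := hinf_ge q
      linarith
    linarith
  obtain ⟨p0, hp0⟩ := Set.mem_range.mp (hrz.csSup_mem (Set.finite_range z))
  obtain ⟨q0, hq0⟩ := Set.mem_range.mp (hrz.csInf_mem (Set.finite_range z))
  have := key p0 q0
  unfold delta
  rw [← hp0, ← hq0]
  linarith

end aux

theorem amortized_midpoint
    (n : ℕ) (hn : 2 ≤ n) (ε : ℝ) (hε0 : 0 < ε) (hε1 : ε < 1)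
    (G : ℕ → Fin n → Fin n → Prop)
    (hrefl : ∀ k, 1 ≤ k → ∀ p, G k p p)
    (hrooted : ∀ k, 1 ≤ k → Rooted (G k))
    (x : ℕ → Fin n → ℝ)
    (hx0 : ∀ p, x 0 p ∈ Set.Icc (0 : ℝ) 1)
    -- at each macro-round `l ≥ 1`, each process `p` adopts the mid-point `(m_p + M_p)/2`
    -- of the values received along the macro-round graph
    -- `Ĝ(l) = G((l−1)(n−1)+1) ∘ ⋯ ∘ G(l(n−1))`
    (hupd : ∀ l, 1 ≤ l → ∀ p,
      x l p = (sInf (x (l - 1) '' {q | ProdSeg G ((l - 1) * (n - 1)) (n - 1) q p}) +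
               sSup (x (l - 1) '' {q | ProdSeg G ((l - 1) * (n - 1)) (n - 1) q p})) / 2) :
    (∀ l : ℕ, delta (x l) ≤ (1 / 2 : ℝ) ^ l * delta (x 0)) ∧
    delta (x ⌈Real.logb 2 (1 / ε)⌉₊) ≤ ε := by
  have hne : Nonempty (Fin n) := ⟨⟨0, by omega⟩⟩
  have main : ∀ l : ℕ, delta (x l) ≤ (1 / 2 : ℝ) ^ l * delta (x 0) := by
    intro l
    induction l with
    | zero => simp
    | succ l ih =>
      have hE := ProdSeg_refl G (l * (n - 1)) hrefl (n - 1)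
      have hsplit := nonsplit G (l * (n - 1)) hn hrefl hrooted
      have hupd' : ∀ p, x (l + 1) p =
          (sInf (x l '' {q | ProdSeg G (l * (n - 1)) (n - 1) q p}) +
           sSup (x l '' {q | ProdSeg G (l * (n - 1)) (n - 1) q p})) / 2 := by
        intro p
        have := hupd (l + 1) (Nat.le_add_left _ _) p
        simpa using this
      have hstep := step_bound hn _ hE hsplit (x l) (x (l + 1)) hupd'
      calc delta (x (l + 1)) ≤ delta (x l) / 2 := hstep
        _ ≤ ((1 / 2 : ℝ) ^ l * delta (x 0)) / 2 := by linarith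
        _ = (1 / 2 : ℝ) ^ (l + 1) * delta (x 0) := by ring
  refine ⟨main, ?_⟩
  set L := ⌈Real.logb 2 (1 / ε)⌉₊
  have hδ0 : delta (x 0) ≤ 1 := by
    unfold delta
    have h1 : sSup (Set.range (x 0)) ≤ 1 :=
      csSup_le (Set.range_nonempty _) (by rintro v ⟨p, rfl⟩; exact (hx0 p).2)
    have h2 : (0 : ℝ) ≤ sInf (Set.range (x 0)) :=
      le_csInf (Set.range_nonempty _) (by rintro v ⟨p, rfl⟩; exact (hx0 p).1)
    linarith
  have hδnn : 0 ≤ delta (x 0) := by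
    unfold delta
    have : sInf (Set.range (x 0)) ≤ sSup (Set.range (x 0)) :=
      csInf_le_csSup (Set.range_nonempty _) (Set.finite_range _).bddBelow
        (Set.finite_range _).bddAbove
    linarith
  have hpow : (1 / 2 : ℝ) ^ L ≤ ε := by
    have hlog : Real.logb 2 (1 / ε) ≤ (L : ℝ) := Nat.le_ceil _
    have h1ε : (0 : ℝ) < 1 / ε := by positivity
    have h2 : (1 / ε : ℝ) ≤ 2 ^ (L : ℝ) := by
      calc (1 / ε : ℝ) = 2 ^ Real.logb 2 (1 / ε) := (Real.rpow_logb (by norm_num) (by norm_num) h1ε).symm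
        _ ≤ 2 ^ (L : ℝ) := Real.rpow_le_rpow_left_iff (by norm_num) |>.mpr hlog
    rw [Real.rpow_natCast] at h2
    have h2pos : (0 : ℝ) < 2 ^ L := by positivity
    rw [div_pow, one_pow, div_le_iff₀ h2pos]
    rw [div_le_iff₀ hε0] at h2
    linarith
  calc delta (x L) ≤ (1 / 2 : ℝ) ^ L * delta (x 0) := main L
    _ ≤ (1 / 2 : ℝ) ^ L * 1 := by
        apply mul_le_mul_of_nonneg_left hδ0 (by positivity)
    _ ≤ ε := by rw [mul_one]; exact hpow
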